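/- Let $k \ge 2$ and $p = 2k$. Suppose $1 > \overline{\mu}_1 > \overline{\mu}_2 > \cdots > \overline{\mu}_k > 0$ and $\{g_{j,i}\}_{j \in \mathbb{N}, 1 \le i \le k}$ is a family of independent symmetric random variables on $[0,1]$ taking only the values $-1, 0, 1$ with $\int |g_{j,i}| = \overline{\mu}_i$ for all $j$. Then $V_p$, the closed linear span in $L_p[0,1]$ of $\{h_j = \sum_{i=1}^k g_{j,i} : j \in \mathbb{N}\}$, is complemented in $L_p[0,1]$. -/

import Mathlib

open MeasureTheory ProbabilityTheory Finset
open scoped ENNReal NNReal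

set_option linter.unusedSectionVars false
set_option maxHeartbeats 1000000
set_option synthInstance.maxHeartbeats 1000000

/-- The probability space `[0,1]` with Lebesgue measure. -/
noncomputable def mu01 : MeasureTheory.Measure ℝ :=
  MeasureTheory.volume.restrict (Set.Icc (0 : ℝ) 1)

instance : IsProbabilityMeasure mu01 := by
  constructor
  rw [mu01, Measure.restrict_apply_univ, Real.volume_Icc]
  norm_num

section IntProd
variable {Ω : Type*} [MeasurableSpace Ω] {μ : Measure Ω} [IsProbabilityMeasure μ]
variable {ι : Type*} {F : ι → Ω → ℝ}

lemma integrable_of_bdd1 {f : Ω → ℝ} (hm : AEStronglyMeasurable f μ)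
    (hb : ∀ᵐ x ∂μ, |f x| ≤ 1) : Integrable f μ := by
  refine Integrable.mono' (integrable_const 1) hm ?_
  filter_upwards [hb] with x hx using by simpa [Real.norm_eq_abs] using hx

lemma prod_bdd1 (t : Finset ι) (hb : ∀ v, ∀ᵐ x ∂μ, |F v x| ≤ 1) :
    ∀ᵐ x ∂μ, |∏ v ∈ t, F v x| ≤ 1 := by
  have := ae_all_iff.2 fun v : t => hb v
  filter_upwards [this] with x hx
  rw [abs_prod]
  calc ∏ v ∈ t, |F v x| ≤ ∏ v ∈ t, 1 :=
        Finset.prod_le_prod (fun v _ => abs_nonneg _) (fun v hv => hx ⟨v, hv⟩)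
    _ = 1 := by simp

lemma indep_integral_prod (h : iIndepFun F μ)
    (hm : ∀ v, Measurable (F v)) (hb : ∀ v, ∀ᵐ x ∂μ, |F v x| ≤ 1) (t : Finset ι) :
    ∫ x, ∏ v ∈ t, F v x ∂μ = ∏ v ∈ t, ∫ x, F v x ∂μ := by
  classical
  refine Finset.induction_on t (by simp) ?_
  intro a t ha ih
  have hind : IndepFun (∏ j ∈ t, F j) (F a) μ :=
    h.indepFun_finsetProd_of_notMem hm ha
  have h1 : Integrable (∏ j ∈ t, F j) μ := by
    refine integrable_of_bdd1 ?_ ?_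
    · have : Measurable (∏ j ∈ t, F j) := by
        rw [Finset.prod_fn]; exact Finset.measurable_prod t fun v _ => hm v
      exact this.aestronglyMeasurable
    · simpa [Finset.prod_apply] using prod_bdd1 t hb
  have h2 : Integrable (F a) μ := integrable_of_bdd1 (hm a).aestronglyMeasurable (hb a)
  have key := hind.integral_mul_eq_mul_integral h1.aestronglyMeasurable h2.aestronglyMeasurable
  rw [Finset.prod_insert ha, ← ih]
  have heq : ∀ x, ∏ v ∈ insert a t, F v x = ((∏ j ∈ t, F j) * F a) x := by
    intro x; simp [Finset.prod_apply, Finset.prod_insert ha, mul_comm]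
  calc ∫ x, ∏ v ∈ insert a t, F v x ∂μ = ∫ x, ((∏ j ∈ t, F j) * F a) x ∂μ := by
        simp_rw [heq]
    _ = (∫ x, (∏ j ∈ t, F j) x ∂μ) * ∫ x, F a x ∂μ := key
    _ = (∫ x, F a x ∂μ) * ∫ x, ∏ v ∈ t, F v x ∂μ := by
        simp [Finset.prod_apply, mul_comm]
end IntProd

section Moments
variable {Ω : Type*} [MeasurableSpace Ω] {μ : Measure Ω} [IsProbabilityMeasure μ]
variable {f : Ω → ℝ}

lemma bdd1_of_val (hval : ∀ᵐ x ∂μ, f x ∈ ({-1, 0, 1} : Set ℝ)) :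
    ∀ᵐ x ∂μ, |f x| ≤ 1 := by
  filter_upwards [hval] with x hx
  simp only [Set.mem_insert_iff, Set.mem_singleton_iff] at hx
  rcases hx with h | h | h <;> simp [h]

lemma int_eq_zero_of_symm (hm : Measurable f)
    (hsymm : μ.map f = μ.map (fun x => - f x)) : ∫ x, f x ∂μ = 0 := by
  have h1 : ∫ y, y ∂(μ.map f) = ∫ x, f x ∂μ :=
    integral_map hm.aemeasurable aestronglyMeasurable_id
  have h2 : ∫ y, y ∂(μ.map (fun x => - f x)) = ∫ x, - f x ∂μ :=
    integral_map hm.neg.aemeasurable aestronglyMeasurable_id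
  rw [hsymm, h2, integral_neg] at h1
  linarith

lemma pow_odd_ae_eq (hval : ∀ᵐ x ∂μ, f x ∈ ({-1, 0, 1} : Set ℝ)) {d : ℕ} (hd : Odd d) :
    (fun x => f x ^ d) =ᵐ[μ] f := by
  filter_upwards [hval] with x hx
  simp only [Set.mem_insert_iff, Set.mem_singleton_iff] at hx
  rcases hx with h | h | h <;> simp [h, hd.neg_one_pow, hd.pos.ne']

lemma pow_even_ae_eq (hval : ∀ᵐ x ∂μ, f x ∈ ({-1, 0, 1} : Set ℝ)) {d : ℕ}
    (hd : Even d) (hd0 : d ≠ 0) : (fun x => f x ^ d) =ᵐ[μ] (fun x => |f x|) := by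
  filter_upwards [hval] with x hx
  simp only [Set.mem_insert_iff, Set.mem_singleton_iff] at hx
  rcases hx with h | h | h <;> simp [h, hd.neg_one_pow, hd0]

lemma int_pow_odd_eq_zero (hm : Measurable f)
    (hval : ∀ᵐ x ∂μ, f x ∈ ({-1, 0, 1} : Set ℝ))
    (hsymm : μ.map f = μ.map (fun x => - f x)) {d : ℕ} (hd : Odd d) :
    ∫ x, f x ^ d ∂μ = 0 := by
  rw [integral_congr_ae (pow_odd_ae_eq hval hd)]
  exact int_eq_zero_of_symm hm hsymm

lemma int_pow_mem_Icc (hm : Measurable f)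
    (hval : ∀ᵐ x ∂μ, f x ∈ ({-1, 0, 1} : Set ℝ)) (d : ℕ) :
    |∫ x, f x ^ d ∂μ| ≤ 1 := by
  have hb : ∀ᵐ x ∂μ, |f x ^ d| ≤ 1 := by
    filter_upwards [bdd1_of_val hval] with x hx
    rw [abs_pow]
    exact pow_le_one₀ (abs_nonneg _) hx
  have hint : Integrable (fun x => f x ^ d) μ := by
    refine Integrable.mono' (integrable_const 1) ((hm.pow_const d).aestronglyMeasurable) ?_
    filter_upwards [hb] with x hx using by simpa [Real.norm_eq_abs] using hx
  calc |∫ x, f x ^ d ∂μ| ≤ ∫ x, |f x ^ d| ∂μ := by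
        simpa [Real.norm_eq_abs] using norm_integral_le_integral_norm (fun x => f x ^ d) (μ := μ)
    _ ≤ ∫ x, (1 : ℝ) ∂μ := integral_mono_ae hint.abs (integrable_const 1) hb
    _ = 1 := by simp

lemma int_pow_even_nonneg (hval : ∀ᵐ x ∂μ, f x ∈ ({-1, 0, 1} : Set ℝ)) {d : ℕ}
    (hd : Even d) : 0 ≤ ∫ x, f x ^ d ∂μ := by
  refine integral_nonneg_of_ae ?_
  filter_upwards [hval] with x hx
  exact hd.pow_nonneg _

lemma int_sq_eq_abs (hval : ∀ᵐ x ∂μ, f x ∈ ({-1, 0, 1} : Set ℝ)) :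
    ∫ x, f x ^ 2 ∂μ = ∫ x, |f x| ∂μ :=
  integral_congr_ae (pow_even_ae_eq hval (by norm_num) (by norm_num))
end Moments

section Key
variable {Ω : Type*} [MeasurableSpace Ω] {μ : Measure Ω} [IsProbabilityMeasure μ]
variable {ι : Type*} [DecidableEq ι] {G : ι → Ω → ℝ}

theorem key_moment_bound (hind : iIndepFun G μ)
    (hm : ∀ v, Measurable (G v))
    (hval : ∀ v, ∀ᵐ x ∂μ, G v x ∈ ({-1, 0, 1} : Set ℝ))
    (hsymm : ∀ v, μ.map (G v) = μ.map (fun x => - G v x))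
    (u : Finset ι) (b : ι → ℝ) (K : ℕ) :
    ∫ x, (∑ v ∈ u, b v * G v x) ^ (2 * K) ∂μ ≤
      (2 * K).factorial * (∑ v ∈ u, (b v) ^ 2) ^ K := by
  classical
  have hGb : ∀ v, ∀ᵐ x ∂μ, |G v x| ≤ 1 := fun v => bdd1_of_val (hval v)
  have expand : ∀ x : Ω, (∑ v ∈ u, b v * G v x) ^ (2 * K) =
      ∑ d ∈ piAntidiag u (2 * K),
        ((Nat.multinomial u d : ℝ) * ∏ v ∈ u, b v ^ d v) * ∏ v ∈ u, G v x ^ d v := by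
    intro x
    rw [Finset.sum_pow_eq_sum_piAntidiag]
    refine Finset.sum_congr rfl fun d _ => ?_
    simp_rw [mul_pow, Finset.prod_mul_distrib]
    ring
  have hmd : ∀ d : ι → ℕ, ∀ v : ι, Measurable fun x => G v x ^ d v :=
    fun d v => (hm v).pow_const (d v)
  have hbd : ∀ d : ι → ℕ, ∀ v : ι, ∀ᵐ x ∂μ, |G v x ^ d v| ≤ 1 := by
    intro d v
    filter_upwards [hGb v] with x hx
    rw [abs_pow]; exact pow_le_one₀ (abs_nonneg _) hx
  have hintprod : ∀ d : ι → ℕ, Integrable (fun x => ∏ v ∈ u, G v x ^ d v) μ := by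
    intro d
    refine integrable_of_bdd1 ?_ (prod_bdd1 u (hbd d))
    exact (Finset.measurable_prod u fun v _ => hmd d v).aestronglyMeasurable
  have hswap : ∫ x, (∑ v ∈ u, b v * G v x) ^ (2 * K) ∂μ =
      ∑ d ∈ piAntidiag u (2 * K),
        ((Nat.multinomial u d : ℝ) * ∏ v ∈ u, b v ^ d v) *
          ∫ x, ∏ v ∈ u, G v x ^ d v ∂μ := by
    calc ∫ x, (∑ v ∈ u, b v * G v x) ^ (2 * K) ∂μ
        = ∫ x, ∑ d ∈ piAntidiag u (2 * K),
            ((Nat.multinomial u d : ℝ) * ∏ v ∈ u, b v ^ d v) * ∏ v ∈ u, G v x ^ d v ∂μ := by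
          simp_rw [expand]
      _ = ∑ d ∈ piAntidiag u (2 * K),
            ∫ x, ((Nat.multinomial u d : ℝ) * ∏ v ∈ u, b v ^ d v) * ∏ v ∈ u, G v x ^ d v ∂μ := by
          refine integral_finset_sum _ fun d _ => ((hintprod d).const_mul _)
      _ = ∑ d ∈ piAntidiag u (2 * K),
            ((Nat.multinomial u d : ℝ) * ∏ v ∈ u, b v ^ d v) *
              ∫ x, ∏ v ∈ u, G v x ^ d v ∂μ := by
          refine Finset.sum_congr rfl fun d _ => integral_const_mul _ _
  have hprodint : ∀ d : ι → ℕ,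
      ∫ x, ∏ v ∈ u, G v x ^ d v ∂μ = ∏ v ∈ u, ∫ x, G v x ^ d v ∂μ := by
    intro d
    exact indep_integral_prod (hind.comp (fun v => (· ^ d v)) fun v =>
      measurable_id.pow_const (d v)) (hmd d) (hbd d) u
  rw [hswap]
  have hterm : ∀ d ∈ piAntidiag u (2 * K),
      ((Nat.multinomial u d : ℝ) * ∏ v ∈ u, b v ^ d v) * ∫ x, ∏ v ∈ u, G v x ^ d v ∂μ ≤
        ((2 * K).factorial : ℝ) *
          (if ∀ v, Even (d v) then ∏ v ∈ u, (b v ^ 2) ^ (d v / 2) else 0) := by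
    intro d hd
    rw [Finset.mem_piAntidiag] at hd
    by_cases hodd : ∀ v, Even (d v)
    · rw [if_pos hodd]
      have hbeq : ∏ v ∈ u, b v ^ d v = ∏ v ∈ u, (b v ^ 2) ^ (d v / 2) := by
        refine Finset.prod_congr rfl fun v _ => ?_
        rw [← pow_mul]
        congr 1
        exact (Nat.two_mul_div_two_of_even (hodd v)).symm
      have hI0 : 0 ≤ ∏ v ∈ u, ∫ x, G v x ^ d v ∂μ :=
        Finset.prod_nonneg fun v _ => int_pow_even_nonneg (hval v) (hodd v)
      have hI1 : ∏ v ∈ u, ∫ x, G v x ^ d v ∂μ ≤ 1 := by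
        refine Finset.prod_le_one (fun v _ => int_pow_even_nonneg (hval v) (hodd v))
          (fun v _ => ?_)
        exact (abs_le.1 (int_pow_mem_Icc (hm v) (hval v) (d v))).2
      have hmle : (Nat.multinomial u d : ℝ) ≤ (2 * K).factorial := by
        have h1 : Nat.multinomial u d ∣ (2 * K).factorial := by
          rw [← hd.1]
          exact Dvd.intro_left _ (Nat.multinomial_spec u d)
        exact_mod_cast Nat.le_of_dvd (Nat.factorial_pos _) h1
      have hbnn : 0 ≤ ∏ v ∈ u, (b v ^ 2) ^ (d v / 2) :=
        Finset.prod_nonneg fun v _ => pow_nonneg (sq_nonneg _) _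
      rw [hprodint d, hbeq]
      calc (Nat.multinomial u d : ℝ) * (∏ v ∈ u, (b v ^ 2) ^ (d v / 2)) *
            ∏ v ∈ u, ∫ x, G v x ^ d v ∂μ
          ≤ (Nat.multinomial u d : ℝ) * (∏ v ∈ u, (b v ^ 2) ^ (d v / 2)) * 1 := by
            refine mul_le_mul_of_nonneg_left hI1 ?_
            positivity
        _ ≤ ((2 * K).factorial : ℝ) * ∏ v ∈ u, (b v ^ 2) ^ (d v / 2) := by
            rw [mul_one]
            exact mul_le_mul_of_nonneg_right hmle hbnn
    · have hoddne := hodd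
      push_neg at hodd
      obtain ⟨v0, hv0⟩ := hodd
      rw [Nat.not_even_iff_odd] at hv0
      have hne : d v0 ≠ 0 := by rcases hv0 with ⟨t, ht⟩; omega
      have hv0u : v0 ∈ u := hd.2 v0 hne
      have hz : ∫ x, ∏ v ∈ u, G v x ^ d v ∂μ = 0 := by
        rw [hprodint d]
        refine Finset.prod_eq_zero hv0u ?_
        exact int_pow_odd_eq_zero (hm v0) (hval v0) (hsymm v0) hv0
      rw [hz, mul_zero, if_neg hoddne, mul_zero]
  calc (∑ d ∈ piAntidiag u (2 * K),
        ((Nat.multinomial u d : ℝ) * ∏ v ∈ u, b v ^ d v) * ∫ x, ∏ v ∈ u, G v x ^ d v ∂μ)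
      ≤ ∑ d ∈ piAntidiag u (2 * K), ((2 * K).factorial : ℝ) *
          (if ∀ v, Even (d v) then ∏ v ∈ u, (b v ^ 2) ^ (d v / 2) else 0) :=
        Finset.sum_le_sum hterm
    _ = ((2 * K).factorial : ℝ) * ∑ d ∈ (piAntidiag u (2 * K)).filter (fun d => ∀ v, Even (d v)),
          ∏ v ∈ u, (b v ^ 2) ^ (d v / 2) := by
        rw [← Finset.mul_sum, Finset.sum_filter]
    _ = ((2 * K).factorial : ℝ) * ∑ m ∈ piAntidiag u K, ∏ v ∈ u, (b v ^ 2) ^ m v := by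
        congr 1
        have himg : (piAntidiag u (2 * K)).filter (fun d => ∀ v, Even (d v)) =
            (piAntidiag u K).image (fun m v => 2 * m v) := by
          ext d
          simp only [Finset.mem_filter, Finset.mem_piAntidiag, Finset.mem_image]
          constructor
          · rintro ⟨⟨hsum, hsupp⟩, heven⟩
            refine ⟨fun v => d v / 2, ⟨?_, ?_⟩, ?_⟩
            · show ∑ v ∈ u, d v / 2 = K
              have h2 : ∑ v ∈ u, 2 * (d v / 2) = 2 * K := by
                rw [← hsum]
                exact Finset.sum_congr rfl fun v _ => Nat.two_mul_div_two_of_even (heven v)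
              rw [← Finset.mul_sum] at h2
              omega
            · intro v hv
              have hv' : d v / 2 ≠ 0 := hv
              exact hsupp v (by omega)
            · funext v
              exact Nat.two_mul_div_two_of_even (heven v)
          · rintro ⟨m, ⟨hsum, hsupp⟩, rfl⟩
            refine ⟨⟨?_, fun v hv => hsupp v (by
              have hv' : 2 * m v ≠ 0 := hv
              omega)⟩, fun v => even_two_mul _⟩
            show ∑ v ∈ u, 2 * m v = 2 * K
            rw [← Finset.mul_sum, hsum]
        rw [himg, Finset.sum_image]
        · refine Finset.sum_congr rfl fun m _ => Finset.prod_congr rfl fun v _ => ?_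
          show (b v ^ 2) ^ (2 * m v / 2) = (b v ^ 2) ^ m v
          congr 1
          omega
        · intro m1 _ m2 _ h
          funext v
          have h2 : 2 * m1 v = 2 * m2 v := congrFun h v
          omega
    _ ≤ ((2 * K).factorial : ℝ) * ∑ m ∈ piAntidiag u K,
          (Nat.multinomial u m : ℝ) * ∏ v ∈ u, (b v ^ 2) ^ m v := by
        refine mul_le_mul_of_nonneg_left (Finset.sum_le_sum fun m _ => ?_)
          (by positivity)
        have h1 : (1 : ℝ) ≤ (Nat.multinomial u m : ℝ) := by
          exact_mod_cast Nat.one_le_iff_ne_zero.2 (Nat.multinomial_pos u m).ne'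
        nth_rewrite 1 [← one_mul (∏ v ∈ u, (b v ^ 2) ^ m v)]
        exact mul_le_mul_of_nonneg_right h1
          (Finset.prod_nonneg fun v _ => pow_nonneg (sq_nonneg _) _)
    _ = ((2 * K).factorial : ℝ) * (∑ v ∈ u, (b v) ^ 2) ^ K := by
        rw [Finset.sum_pow_eq_sum_piAntidiag]
end Key

section NormBound
variable {Ω : Type*} [MeasurableSpace Ω] {μ : Measure Ω} [IsProbabilityMeasure μ]

lemma norm_le_of_moment {K : ℕ} (hK : K ≠ 0) [Fact (1 ≤ ((2 * K : ℕ) : ℝ≥0∞))]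
    (f : Lp ℝ ((2 * K : ℕ) : ℝ≥0∞) μ) {S : ℝ} (hS : 0 ≤ S)
    (hB : ∫ x, (f x) ^ (2 * K) ∂μ ≤ ((2 * K).factorial : ℝ) * S ^ K) :
    ‖f‖ ≤ (((2 * K).factorial : ℝ) ^ (((2 * K : ℕ) : ℝ))⁻¹) * Real.sqrt S := by
  have hp0 : ((2 * K : ℕ) : ℝ≥0∞) ≠ 0 := by simp [hK]
  have hmem : MemLp (⇑f) ((2 * K : ℕ) : ℝ≥0∞) μ := Lp.memLp f
  have hint_eq : ∫ a, ‖f a‖ ^ (((2 * K : ℕ) : ℝ≥0∞)).toReal ∂μ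
      = ∫ a, ‖f a‖ ^ (2 * K) ∂μ := by
    refine integral_congr_ae (Filter.Eventually.of_forall fun x => ?_)
    show ‖f x‖ ^ ((2 * K : ℕ) : ℝ≥0∞).toReal = ‖f x‖ ^ (2 * K)
    rw [show ((2 * K : ℕ) : ℝ≥0∞).toReal = ((2 * K : ℕ) : ℝ) by simp, Real.rpow_natCast]
  have hnorm : ‖f‖ = (∫ x, ‖f x‖ ^ (2 * K) ∂μ) ^ (((2 * K : ℕ) : ℝ))⁻¹ := by
    rw [Lp.norm_def, hmem.eLpNorm_eq_integral_rpow_norm hp0 (ENNReal.natCast_ne_top _),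
      hint_eq, ENNReal.toReal_ofReal (by positivity),
      show ((2 * K : ℕ) : ℝ≥0∞).toReal = ((2 * K : ℕ) : ℝ) by simp]
  have habs : ∀ x : Ω, ‖f x‖ ^ (2 * K) = (f x) ^ (2 * K) := fun x => by
    rw [Real.norm_eq_abs]; exact (even_two_mul K).pow_abs _
  have hint_nonneg : 0 ≤ ∫ x, ‖f x‖ ^ (2 * K) ∂μ :=
    integral_nonneg fun x => by positivity
  rw [hnorm]
  have hstep : (∫ x, ‖f x‖ ^ (2 * K) ∂μ) ^ (((2 * K : ℕ) : ℝ))⁻¹ ≤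
      (((2 * K).factorial : ℝ) * S ^ K) ^ (((2 * K : ℕ) : ℝ))⁻¹ := by
    refine Real.rpow_le_rpow hint_nonneg ?_ (by positivity)
    calc ∫ x, ‖f x‖ ^ (2 * K) ∂μ = ∫ x, (f x) ^ (2 * K) ∂μ := by simp_rw [habs]
      _ ≤ _ := hB
  refine hstep.trans_eq ?_
  rw [Real.mul_rpow (by positivity) (by positivity)]
  congr 1
  rw [← Real.rpow_natCast S K, ← Real.rpow_mul hS, Real.sqrt_eq_rpow]
  congr 1
  have : ((2 * K : ℕ) : ℝ) = 2 * (K : ℝ) := by push_cast; ring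
  rw [this]
  have hKr : (K : ℝ) ≠ 0 := Nat.cast_ne_zero.2 hK
  field_simp
end NormBound

section Incl
variable {Ω : Type*} [MeasurableSpace Ω] {μ : Measure Ω} [IsProbabilityMeasure μ]
variable {p : ℝ≥0∞} [Fact (1 ≤ p)]

lemma coeFn_finset_sum {ι : Type*} (s : Finset ι) (f : ι → Lp ℝ p μ) :
    ⇑(∑ i ∈ s, f i) =ᵐ[μ] fun x => ∑ i ∈ s, f i x := by
  classical
  induction s using Finset.induction_on with
  | empty => simp only [Finset.sum_empty]; exact Lp.coeFn_zero (E := ℝ) (p := p) (μ := μ)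
  | @insert a s ha ih =>
    rw [Finset.sum_insert ha]
    filter_upwards [Lp.coeFn_add (f a) (∑ i ∈ s, f i), ih] with x h1 h2
    rw [h1]
    simp only [Pi.add_apply, h2, Finset.sum_insert ha]

variable (μ p) in
noncomputable def inclL2 (hp : 2 ≤ p) : Lp ℝ p μ →L[ℝ] Lp ℝ 2 μ :=
  LinearMap.mkContinuous
    { toFun := fun f => ((Lp.memLp f).mono_exponent hp).toLp ⇑f
      map_add' := fun f g => by
        rw [← MemLp.toLp_add]
        exact MemLp.toLp_congr _ _ (Lp.coeFn_add f g)
      map_smul' := fun c f => by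
        simp only [RingHom.id_apply]
        rw [← MemLp.toLp_const_smul]
        exact MemLp.toLp_congr _ _ (Lp.coeFn_smul c f) }
    1 (fun f => by
      simp only [LinearMap.coe_mk, AddHom.coe_mk, one_mul]
      rw [Lp.norm_toLp, Lp.norm_def]
      refine ENNReal.toReal_mono (Lp.eLpNorm_ne_top f) ?_
      exact eLpNorm_le_eLpNorm_of_exponent_le hp (Lp.aestronglyMeasurable f))

lemma inclL2_coeFn (hp : 2 ≤ p) (f : Lp ℝ p μ) : ⇑(inclL2 μ p hp f) =ᵐ[μ] ⇑f :=
  MemLp.coeFn_toLp ((Lp.memLp f).mono_exponent hp)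

lemma inclL2_norm_le (hp : 2 ≤ p) (f : Lp ℝ p μ) : ‖inclL2 μ p hp f‖ ≤ ‖f‖ := by
  have h0 : ‖inclL2 μ p hp f‖ = ‖((Lp.memLp f).mono_exponent hp).toLp ⇑f‖ := rfl
  rw [h0, Lp.norm_toLp, Lp.norm_def]
  exact ENNReal.toReal_mono (Lp.eLpNorm_ne_top f)
    (eLpNorm_le_eLpNorm_of_exponent_le hp (Lp.aestronglyMeasurable f))
end Incl

section Summable
variable {E : Type*} [NormedAddCommGroup E] [CompleteSpace E]

lemma summable_of_sq_control {v : ℕ → E} {c : ℕ → ℝ}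
    (hc : Summable fun j => c j ^ 2) {C : ℝ} (hC : 0 ≤ C)
    (hb : ∀ t : Finset ℕ, ‖∑ j ∈ t, v j‖ ≤ C * Real.sqrt (∑ j ∈ t, c j ^ 2)) :
    Summable v := by
  rw [summable_iff_vanishing]
  intro e he
  rcases Metric.mem_nhds_iff.1 he with ⟨ε, hε, hball⟩
  have hc' := summable_iff_vanishing.1 hc (Metric.ball 0 ((ε / (C + 1)) ^ 2))
    (Metric.ball_mem_nhds _ (by positivity))
  obtain ⟨s₀, hs₀⟩ := hc'
  refine ⟨s₀, fun t ht => hball ?_⟩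
  have h1 : ∑ j ∈ t, c j ^ 2 < (ε / (C + 1)) ^ 2 := by
    have := hs₀ t ht
    rw [Metric.mem_ball, Real.dist_eq, sub_zero] at this
    calc ∑ j ∈ t, c j ^ 2 ≤ |∑ j ∈ t, c j ^ 2| := le_abs_self _
      _ < _ := this
  rw [Metric.mem_ball, dist_zero_right]
  have hsq : Real.sqrt (∑ j ∈ t, c j ^ 2) ≤ ε / (C + 1) := by
    rw [show ε / (C + 1) = Real.sqrt ((ε / (C + 1)) ^ 2) by
      rw [Real.sqrt_sq (by positivity)]]
    exact Real.sqrt_le_sqrt h1.le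
  calc ‖∑ j ∈ t, v j‖ ≤ C * Real.sqrt (∑ j ∈ t, c j ^ 2) := hb t
    _ ≤ C * (ε / (C + 1)) := mul_le_mul_of_nonneg_left hsq hC
    _ = ε * (C / (C + 1)) := by ring
    _ < ε * 1 := by
        refine mul_lt_mul_of_pos_left ?_ hε
        rw [div_lt_one (by positivity)]
        linarith
    _ = ε := mul_one _

lemma norm_tsum_le_of_sq_control {v : ℕ → E} {c : ℕ → ℝ}
    (hc : Summable fun j => c j ^ 2) {C : ℝ} (hC : 0 ≤ C)
    (hb : ∀ t : Finset ℕ, ‖∑ j ∈ t, v j‖ ≤ C * Real.sqrt (∑ j ∈ t, c j ^ 2)) :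
    ‖∑' j, v j‖ ≤ C * Real.sqrt (∑' j, c j ^ 2) := by
  have hv : Summable v := summable_of_sq_control hc hC hb
  have htend : Filter.Tendsto (fun t : Finset ℕ => ‖∑ j ∈ t, v j‖) Filter.atTop
      (nhds ‖∑' j, v j‖) := hv.hasSum.norm
  refine le_of_tendsto htend (Filter.Eventually.of_forall fun t => ?_)
  refine (hb t).trans ?_
  refine mul_le_mul_of_nonneg_left ?_ hC
  refine Real.sqrt_le_sqrt ?_
  exact Summable.sum_le_tsum t (fun j _ => sq_nonneg _) hc
end Summable

/-- **Corollary `vp`.** For `p = 2k` even, `k ≥ 2`, if `{g_{j,i}}_{j ∈ ℕ, 1 ≤ i ≤ k}` is a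
family of independent symmetric `{-1,0,1}`-valued random variables with `∫ |g_{j,i}| = μ̄ᵢ`
where `1 > μ̄₁ > ⋯ > μ̄_k > 0`, then `V_p`, the closed linear span in `L_p[0,1]` of the
sums `h_j = ∑_{i=1}^k g_{j,i}`, is complemented in `L_p[0,1]`. -/
theorem Vp_complemented (k : ℕ) (hk : 2 ≤ k)
    [Fact (1 ≤ ((2 * k : ℕ) : ℝ≥0∞))]
    (μbar : Fin k → ℝ)
    (hdec : ∀ i i' : Fin k, i < i' → μbar i' < μbar i)
    (hlt1 : ∀ i, μbar i < 1) (hpos : ∀ i, 0 < μbar i)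
    (g : ℕ → Fin k → Lp ℝ ((2 * k : ℕ) : ℝ≥0∞) mu01)
    (hval : ∀ j i, ∀ᵐ x ∂mu01, g j i x ∈ ({-1, 0, 1} : Set ℝ))
    (hindep : iIndepFun
      (fun x : ℕ × Fin k => ⇑(g x.1 x.2)) mu01)
    (hsymm : ∀ j i, mu01.map ⇑(g j i) = mu01.map (fun x => - g j i x))
    (habs : ∀ j i, ∫ x, |g j i x| ∂mu01 = μbar i) :
    ∃ P : Lp ℝ ((2 * k : ℕ) : ℝ≥0∞) mu01 →L[ℝ] Lp ℝ ((2 * k : ℕ) : ℝ≥0∞) mu01,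
      (∀ f, P f ∈ (Submodule.span ℝ
          (Set.range fun j : ℕ => ∑ i, g j i)).topologicalClosure) ∧
      ∀ f ∈ (Submodule.span ℝ
          (Set.range fun j : ℕ => ∑ i, g j i)).topologicalClosure, P f = f := by
  classical
  have hk0 : k ≠ 0 := by omega
  have hp2 : (2 : ℝ≥0∞) ≤ ((2 * k : ℕ) : ℝ≥0∞) := by
    have hnat : (2 : ℕ) ≤ 2 * k := by omega
    have h1 : ((2 : ℕ) : ℝ≥0∞) ≤ ((2 * k : ℕ) : ℝ≥0∞) := by exact_mod_cast hnat
    simpa using h1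
  set h : ℕ → Lp ℝ ((2 * k : ℕ) : ℝ≥0∞) mu01 := fun j => ∑ i, g j i with hh
  have hmG : ∀ v : ℕ × Fin k, Measurable (⇑(g v.1 v.2)) :=
    fun v => (Lp.stronglyMeasurable _).measurable
  have hvalv : ∀ v : ℕ × Fin k, ∀ᵐ x ∂mu01, g v.1 v.2 x ∈ ({-1, 0, 1} : Set ℝ) :=
    fun v => hval v.1 v.2
  have hsymmv : ∀ v : ℕ × Fin k,
      mu01.map ⇑(g v.1 v.2) = mu01.map (fun x => - g v.1 v.2 x) := fun v => hsymm v.1 v.2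
  have hGb : ∀ v : ℕ × Fin k, ∀ᵐ x ∂mu01, |g v.1 v.2 x| ≤ 1 := fun v => bdd1_of_val (hvalv v)
  have hcoe : ∀ j, ⇑(h j) =ᵐ[mu01] fun x => ∑ i, g j i x := fun j => coeFn_finset_sum _ _
  have hint1 : ∀ v : ℕ × Fin k, Integrable (⇑(g v.1 v.2)) mu01 :=
    fun v => integrable_of_bdd1 ((hmG v).aestronglyMeasurable) (hGb v)
  have hmean : ∀ v : ℕ × Fin k, ∫ x, g v.1 v.2 x ∂mu01 = 0 :=
    fun v => int_eq_zero_of_symm (hmG v) (hsymmv v)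
  -- pairwise products
  have hpair : ∀ v w : ℕ × Fin k,
      ∫ x, g v.1 v.2 x * g w.1 w.2 x ∂mu01 = if v = w then μbar v.2 else 0 := by
    intro v w
    by_cases hvw : v = w
    · subst hvw
      rw [if_pos rfl]
      have : ∫ x, g v.1 v.2 x * g v.1 v.2 x ∂mu01 = ∫ x, (g v.1 v.2 x) ^ 2 ∂mu01 := by
        congr 1; funext x; ring
      rw [this, int_sq_eq_abs (hvalv v), habs]
    · rw [if_neg hvw]
      have hiw : IndepFun (⇑(g v.1 v.2)) (⇑(g w.1 w.2)) mu01 := hindep.indepFun hvw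
      have key := hiw.integral_mul_eq_mul_integral (hint1 v).aestronglyMeasurable (hint1 w).aestronglyMeasurable
      calc ∫ x, g v.1 v.2 x * g w.1 w.2 x ∂mu01
          = (∫ x, g v.1 v.2 x ∂mu01) * ∫ x, g w.1 w.2 x ∂mu01 := key
        _ = 0 := by rw [hmean v, zero_mul]
  -- the L2 quantities
  set σ2 : ℝ := ∑ i, μbar i with hσ2
  have hσ2pos : 0 < σ2 :=
    Finset.sum_pos (fun i _ => hpos i) ⟨⟨0, by omega⟩, Finset.mem_univ _⟩
  set σ : ℝ := Real.sqrt σ2 with hσ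
  have hσpos : 0 < σ := Real.sqrt_pos.2 hσ2pos
  have hσmul : σ * σ = σ2 := Real.mul_self_sqrt hσ2pos.le
  set ι2 : Lp ℝ ((2 * k : ℕ) : ℝ≥0∞) mu01 →L[ℝ] Lp ℝ 2 mu01 :=
    inclL2 mu01 ((2 * k : ℕ) : ℝ≥0∞) hp2 with hι2
  -- inner products of the h's in L2
  have hprod_int : ∀ v w : ℕ × Fin k,
      Integrable (fun x => g v.1 v.2 x * g w.1 w.2 x) mu01 := by
    intro v w
    refine integrable_of_bdd1 ?_ ?_
    · exact ((hmG v).mul (hmG w)).aestronglyMeasurable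
    · filter_upwards [hGb v, hGb w] with x h1 h2
      rw [abs_mul]
      exact mul_le_one₀ h1 (abs_nonneg _) h2
  have hinner : ∀ j j' : ℕ,
      (inner ℝ (ι2 (h j)) (ι2 (h j')) : ℝ) = if j = j' then σ2 else 0 := by
    intro j j'
    rw [MeasureTheory.L2.inner_def]
    have hae : ∀ᵐ x ∂mu01, (inner ℝ (ι2 (h j) x) (ι2 (h j') x) : ℝ)
        = ∑ i : Fin k, ∑ i' : Fin k, g j i x * g j' i' x := by
      filter_upwards [inclL2_coeFn hp2 (h j), inclL2_coeFn hp2 (h j'), hcoe j, hcoe j']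
        with x a1 a2 b1 b2
      rw [a1, a2, b1, b2, ← Finset.sum_mul_sum]
      simp [real_inner_comm]
      ring
    rw [integral_congr_ae hae]
    have hexp : ∫ x, ∑ i : Fin k, ∑ i' : Fin k, g j i x * g j' i' x ∂mu01
        = ∑ i : Fin k, ∑ i' : Fin k, ∫ x, g j i x * g j' i' x ∂mu01 := by
      rw [integral_finset_sum]
      · exact Finset.sum_congr rfl fun i _ => integral_finset_sum _
          (fun i' _ => hprod_int (j, i) (j', i'))
      · exact fun i _ => integrable_finset_sum _ (fun i' _ => hprod_int (j, i) (j', i'))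
    rw [hexp]
    by_cases hjj : j = j'
    · subst hjj
      rw [if_pos rfl]
      have hdiag : ∀ i i' : Fin k, ∫ x, g j i x * g j i' x ∂mu01
          = if i = i' then μbar i else 0 := by
        intro i i'
        have := hpair (j, i) (j, i')
        simpa [Prod.ext_iff] using this
      simp_rw [hdiag]
      simp [hσ2]
    · rw [if_neg hjj]
      have hoff : ∀ i i' : Fin k, ∫ x, g j i x * g j' i' x ∂mu01 = 0 := by
        intro i i'
        have := hpair (j, i) (j', i')
        simpa [Prod.ext_iff, hjj] using this
      simp [hoff]
  -- the orthonormal family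
  set e : ℕ → Lp ℝ 2 mu01 := fun j => σ⁻¹ • ι2 (h j) with he
  have horth : Orthonormal ℝ e := by
    rw [orthonormal_iff_ite]
    intro j j'
    rw [he]
    simp only [real_inner_smul_left, real_inner_smul_right]
    rw [hinner j j']
    by_cases hjj : j = j'
    · rw [if_pos hjj, if_pos hjj]
      field_simp
      rw [sq]; exact hσmul.symm
    · rw [if_neg hjj, if_neg hjj]
      ring
  -- the coefficient functionals and Bessel's inequality
  set c : Lp ℝ ((2 * k : ℕ) : ℝ≥0∞) mu01 → ℕ → ℝ :=
    fun f j => (inner ℝ (e j) (ι2 f) : ℝ) with hc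
  have hbessel_sum : ∀ f, Summable (fun j => c f j ^ 2) := by
    intro f
    have h1 := horth.inner_products_summable (x := ι2 f)
    refine h1.congr fun j => ?_
    rw [Real.norm_eq_abs, sq_abs]
  have hbessel_le : ∀ f, ∑' j, c f j ^ 2 ≤ ‖ι2 f‖ ^ 2 := by
    intro f
    have h2 := horth.tsum_inner_products_le (ι2 f)
    calc ∑' j, c f j ^ 2 = ∑' j, ‖(inner ℝ (e j) (ι2 f) : ℝ)‖ ^ 2 :=
          tsum_congr fun j => by rw [Real.norm_eq_abs, sq_abs]
      _ ≤ ‖ι2 f‖ ^ 2 := h2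
  -- key norm bound
  set Cb : ℝ := (((2 * k).factorial : ℝ) ^ (((2 * k : ℕ) : ℝ))⁻¹) * Real.sqrt k with hCb
  have hCbpos : 0 ≤ Cb := by positivity
  have hkey : ∀ (t : Finset ℕ) (γ : ℕ → ℝ),
      ‖∑ j ∈ t, γ j • h j‖ ≤ Cb * Real.sqrt (∑ j ∈ t, γ j ^ 2) := by
    intro t γ
    set u : Finset (ℕ × Fin k) := t ×ˢ Finset.univ with hu
    set b : ℕ × Fin k → ℝ := fun v => γ v.1 with hb
    have hS : (0 : ℝ) ≤ ∑ v ∈ u, b v ^ 2 := by positivity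
    have hcoe2 : ⇑(∑ j ∈ t, γ j • h j) =ᵐ[mu01] fun x => ∑ v ∈ u, b v * g v.1 v.2 x := by
      have H : ∀ᵐ x ∂mu01, ∀ j ∈ (t : Set ℕ), (γ j • h j) x = γ j * ∑ i, g j i x := by
        rw [MeasureTheory.ae_ball_iff t.countable_toSet]
        intro j hj
        filter_upwards [Lp.coeFn_smul (γ j) (h j), hcoe j] with x h1 h2
        rw [h1]
        simp [h2]
      filter_upwards [coeFn_finset_sum t (fun j => γ j • h j), H] with x h1 h2
      rw [h1]
      calc ∑ j ∈ t, (γ j • h j) x = ∑ j ∈ t, γ j * ∑ i, g j i x :=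
            Finset.sum_congr rfl fun j hj => h2 j (Finset.mem_coe.2 hj)
        _ = ∑ v ∈ u, b v * g v.1 v.2 x := by
            rw [hu, Finset.sum_product]
            exact Finset.sum_congr rfl fun j _ => by rw [Finset.mul_sum]
    have hmom : ∫ x, ((∑ j ∈ t, γ j • h j : Lp ℝ ((2 * k : ℕ) : ℝ≥0∞) mu01) x) ^ (2 * k) ∂mu01 ≤
        ((2 * k).factorial : ℝ) * (∑ v ∈ u, b v ^ 2) ^ k := by
      have hcongr : ∫ x, ((∑ j ∈ t, γ j • h j : Lp ℝ ((2 * k : ℕ) : ℝ≥0∞) mu01) x) ^ (2 * k) ∂mu01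
          = ∫ x, (∑ v ∈ u, b v * g v.1 v.2 x) ^ (2 * k) ∂mu01 := by
        refine integral_congr_ae ?_
        filter_upwards [hcoe2] with x hx
        rw [hx]
      rw [hcongr]
      exact key_moment_bound hindep hmG hvalv hsymmv u b k
    have hnm := norm_le_of_moment hk0 (∑ j ∈ t, γ j • h j) hS hmom
    refine hnm.trans ?_
    have hSeq : ∑ v ∈ u, b v ^ 2 = (k : ℝ) * ∑ j ∈ t, γ j ^ 2 := by
      rw [hu, Finset.sum_product]
      simp only [hb]
      rw [Finset.mul_sum]
      exact Finset.sum_congr rfl fun j _ => by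
        simp [Finset.sum_const, mul_comm]
    rw [hSeq, Real.sqrt_mul (by positivity), hCb]
    exact le_of_eq (by ring)
  -- the series defining the projection
  set T : Lp ℝ ((2 * k : ℕ) : ℝ≥0∞) mu01 → ℕ → Lp ℝ ((2 * k : ℕ) : ℝ≥0∞) mu01 :=
    fun f j => (σ⁻¹ * c f j) • h j with hT
  have hsumc : ∀ f, Summable (fun j => (σ⁻¹ * c f j) ^ 2) := by
    intro f
    simp_rw [mul_pow]
    exact (hbessel_sum f).mul_left _
  have hband : ∀ f (t : Finset ℕ),
      ‖∑ j ∈ t, T f j‖ ≤ Cb * Real.sqrt (∑ j ∈ t, (σ⁻¹ * c f j) ^ 2) :=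
    fun f t => hkey t _
  have hsum : ∀ f, Summable (T f) := fun f => summable_of_sq_control (hsumc f) hCbpos (hband f)
  have hnormP : ∀ f, ‖∑' j, T f j‖ ≤ (Cb * σ⁻¹) * ‖f‖ := by
    intro f
    have h1 := norm_tsum_le_of_sq_control (hsumc f) hCbpos (hband f)
    refine h1.trans ?_
    have h2 : ∑' j, (σ⁻¹ * c f j) ^ 2 = σ⁻¹ ^ 2 * ∑' j, c f j ^ 2 := by
      simp_rw [mul_pow]
      exact tsum_mul_left
    have h4 : Real.sqrt (∑' j, (σ⁻¹ * c f j) ^ 2) ≤ σ⁻¹ * ‖f‖ := by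
      rw [h2]
      calc Real.sqrt (σ⁻¹ ^ 2 * ∑' j, c f j ^ 2)
          ≤ Real.sqrt (σ⁻¹ ^ 2 * ‖ι2 f‖ ^ 2) :=
            Real.sqrt_le_sqrt (mul_le_mul_of_nonneg_left (hbessel_le f) (sq_nonneg _))
        _ = σ⁻¹ * ‖ι2 f‖ := by
            rw [Real.sqrt_mul (sq_nonneg _), Real.sqrt_sq (inv_nonneg.2 hσpos.le),
              Real.sqrt_sq (norm_nonneg _)]
        _ ≤ σ⁻¹ * ‖f‖ := mul_le_mul_of_nonneg_left (inclL2_norm_le hp2 f) (inv_nonneg.2 hσpos.le)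
    calc Cb * Real.sqrt (∑' j, (σ⁻¹ * c f j) ^ 2) ≤ Cb * (σ⁻¹ * ‖f‖) :=
          mul_le_mul_of_nonneg_left h4 hCbpos
      _ = (Cb * σ⁻¹) * ‖f‖ := by ring
  -- linearity
  have hcadd : ∀ f f' j, c (f + f') j = c f j + c f' j := by
    intro f f' j
    simp only [hc, map_add, inner_add_right]
  have hcsmul : ∀ (r : ℝ) f j, c (r • f) j = r * c f j := by
    intro r f j
    simp only [hc, _root_.map_smul, real_inner_smul_right]
  set P0 : Lp ℝ ((2 * k : ℕ) : ℝ≥0∞) mu01 →ₗ[ℝ] Lp ℝ ((2 * k : ℕ) : ℝ≥0∞) mu01 :=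
    { toFun := fun f => ∑' j, T f j
      map_add' := by
        intro f f'
        have hTa : ∀ j, T (f + f') j = T f j + T f' j := by
          intro j
          simp only [hT]
          rw [hcadd, ← add_smul]
          ring_nf
        rw [tsum_congr hTa, Summable.tsum_add (hsum f) (hsum f')]
      map_smul' := by
        intro r f
        have hTs : ∀ j, T (r • f) j = r • T f j := by
          intro j
          simp only [hT]
          rw [hcsmul, smul_smul]
          ring_nf
        simp only [RingHom.id_apply]
        rw [tsum_congr hTs, Summable.tsum_const_smul r (hsum f)] } with hP0
  set P : Lp ℝ ((2 * k : ℕ) : ℝ≥0∞) mu01 →L[ℝ] Lp ℝ ((2 * k : ℕ) : ℝ≥0∞) mu01 :=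
    P0.mkContinuous (Cb * σ⁻¹) hnormP with hP
  have hPapply : ∀ f, P f = ∑' j, T f j := fun f => rfl
  refine ⟨P, ?_, ?_⟩
  · intro f
    have hmemspan : ∀ t : Finset ℕ, ∑ j ∈ t, T f j ∈
        Submodule.span ℝ (Set.range fun j : ℕ => ∑ i, g j i) := by
      intro t
      exact Submodule.sum_mem _ fun j _ =>
        Submodule.smul_mem _ _ (Submodule.subset_span ⟨j, rfl⟩)
    rw [hPapply]
    refine (Submodule.isClosed_topologicalClosure _).mem_of_tendsto (hsum f).hasSum
      (Filter.Eventually.of_forall fun t =>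
        Submodule.le_topologicalClosure _ (hmemspan t))
  · -- P fixes the generators, hence the closure
    have hcval : ∀ j0 j : ℕ, c (h j0) j = if j = j0 then σ else 0 := by
      intro j0 j
      simp only [hc, he, real_inner_smul_left]
      rw [hinner j j0]
      by_cases hjj : j = j0
      · rw [if_pos hjj, if_pos hjj, ← hσmul]
        field_simp
      · rw [if_neg hjj, if_neg hjj, mul_zero]
    have hfix : ∀ j0, P (h j0) = h j0 := by
      intro j0
      rw [hPapply]
      have hterm : ∀ j, j ≠ j0 → T (h j0) j = 0 := by
        intro j hj
        simp only [hT]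
        rw [hcval j0 j, if_neg hj, mul_zero, zero_smul]
      rw [tsum_eq_single j0 hterm]
      simp only [hT]
      rw [hcval j0 j0, if_pos rfl, inv_mul_cancel₀ hσpos.ne', one_smul]
    intro f hf
    have hker : (Submodule.span ℝ (Set.range fun j : ℕ => ∑ i, g j i)).topologicalClosure ≤
        LinearMap.ker ((P - ContinuousLinearMap.id ℝ (Lp ℝ ((2 * k : ℕ) : ℝ≥0∞) mu01) :
          Lp ℝ ((2 * k : ℕ) : ℝ≥0∞) mu01 →ₗ[ℝ] Lp ℝ ((2 * k : ℕ) : ℝ≥0∞) mu01)) := by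
      refine Submodule.topologicalClosure_minimal _ ?_ ?_
      · rw [Submodule.span_le]
        rintro x ⟨j0, rfl⟩
        rw [SetLike.mem_coe, LinearMap.mem_ker]
        show P (h j0) - (h j0) = 0
        rw [hfix j0, sub_self]
      · exact ContinuousLinearMap.isClosed_ker (P - ContinuousLinearMap.id ℝ (Lp ℝ ((2 * k : ℕ) : ℝ≥0∞) mu01))
    have hmem := hker hf
    rw [LinearMap.mem_ker] at hmem
    have : P f - f = 0 := by
      simpa [ContinuousLinearMap.sub_apply] using hmem
    exact sub_eq_zero.1 this
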